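/- Let Ω ⊆ ℝ^{m-1} be an open bounded convex set with 0 ∈ Ω, and let γ be its Minkowski gauge γ(x') = inf{ t > 0 : x'/t ∈ Ω }. Define Ψ : Ω̄ × [0,1] → ∂_⊔(Ω̄ × [0,1]) by Ψ(x', x_m) = (2x'/(2 - x_m), 0) if γ(x') ≤ 1 - x_m/2, and Ψ(x', x_m) = (x'/γ(x'), 2 - (2 - x_m)/γ(x')) otherwise, where ∂_⊔(Ω̄ × [0,1]) := (Ω̄ × {0}) ∪ (∂Ω × [0,1]). Then Ψ is well-defined, continuous, and restricts to the identity on ∂_⊔(Ω̄ × [0,1]). -/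

import Mathlib

set_option maxHeartbeats 800000


open Set Topology

/-- The descending retraction of the cylinder `Ω̄ × [0,1]` onto its enclosing boundary,
defined via the Minkowski gauge of `Ω`. -/
noncomputable def psiMap {m : ℕ} (Ω : Set (EuclideanSpace ℝ (Fin (m-1))))
    (p : EuclideanSpace ℝ (Fin (m-1)) × ℝ) : EuclideanSpace ℝ (Fin (m-1)) × ℝ :=
  if gauge Ω p.1 ≤ 1 - p.2 / 2 then ((2 / (2 - p.2)) • p.1, 0)
  else ((gauge Ω p.1)⁻¹ • p.1, 2 - (2 - p.2) / gauge Ω p.1)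

/-- `Ψ` maps the cylinder into the enclosing boundary
`∂_⊔(Ω̄ × [0,1]) = (Ω̄ × {0}) ∪ (∂Ω × [0,1])`, is continuous on the cylinder, and
restricts to the identity on the enclosing boundary. -/
theorem stmt2 {m : ℕ} (Ω : Set (EuclideanSpace ℝ (Fin (m-1))))
    (hopen : IsOpen Ω) (hbdd : Bornology.IsBounded Ω) (hconv : Convex ℝ Ω)
    (h0 : (0 : EuclideanSpace ℝ (Fin (m-1))) ∈ Ω) :
    Set.MapsTo (psiMap Ω) (closure Ω ×ˢ Set.Icc (0:ℝ) 1)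
        ((closure Ω ×ˢ ({0} : Set ℝ)) ∪ (frontier Ω ×ˢ Set.Icc (0:ℝ) 1)) ∧
      ContinuousOn (psiMap Ω) (closure Ω ×ˢ Set.Icc (0:ℝ) 1) ∧
      Set.EqOn (psiMap Ω) id
        ((closure Ω ×ˢ ({0} : Set ℝ)) ∪ (frontier Ω ×ˢ Set.Icc (0:ℝ) 1)) := by
  have n0 : Ω ∈ 𝓝 (0 : EuclideanSpace ℝ (Fin (m-1))) := hopen.mem_nhds h0
  have hclos : ∀ x, gauge Ω x ≤ 1 ↔ x ∈ closure Ω := fun x =>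
    gauge_le_one_iff_mem_closure hconv n0
  have hfront : ∀ x, gauge Ω x = 1 ↔ x ∈ frontier Ω := fun x =>
    gauge_eq_one_iff_mem_frontier hconv n0
  have hγc : Continuous (gauge Ω) := continuous_gauge hconv n0
  refine ⟨?_, ?_, ?_⟩
  · -- MapsTo
    rintro ⟨x, t⟩ ⟨hx, ht0, ht1⟩
    simp only [mem_prod] at hx ht0 ht1 ⊢
    have hγx : gauge Ω x ≤ 1 := (hclos x).2 hx
    have h2t : (0:ℝ) < 2 - t := by linarith
    unfold psiMap
    split_ifs with h
    · left
      refine ⟨?_, rfl⟩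
      rw [← hclos]
      rw [gauge_smul_of_nonneg (by positivity : (0:ℝ) ≤ 2 / (2 - t))]
      rw [smul_eq_mul]
      rw [div_mul_eq_mul_div, div_le_one h2t]
      linarith
    · push_neg at h
      have hγpos : 0 < gauge Ω x := by linarith
      right
      refine ⟨?_, ?_, ?_⟩
      · rw [← hfront]
        rw [gauge_smul_of_nonneg (by positivity : (0:ℝ) ≤ (gauge Ω x)⁻¹), smul_eq_mul]
        field_simp
      · simp only
        rw [sub_nonneg, div_le_iff₀ hγpos]
        linarith
      · simp only
        have : 2 - t ≤ (2 - t) / gauge Ω x := by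
          rw [le_div_iff₀ hγpos]
          nlinarith
        linarith
  · -- Continuity
    have hcyl : ∀ p : EuclideanSpace ℝ (Fin (m-1)) × ℝ,
        p ∈ closure Ω ×ˢ Set.Icc (0:ℝ) 1 → (0:ℝ) < 2 - p.2 := by
      rintro ⟨x, t⟩ ⟨hx, ht0, ht1⟩; simp only; linarith
    have hP : Continuous fun p : EuclideanSpace ℝ (Fin (m-1)) × ℝ => gauge Ω p.1 :=
      hγc.comp continuous_fst
    have hQ : Continuous fun p : EuclideanSpace ℝ (Fin (m-1)) × ℝ => 1 - p.2 / 2 := by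
      exact continuous_const.sub (continuous_snd.div_const 2)
    unfold psiMap
    apply ContinuousOn.if
    · rintro ⟨x, t⟩ ⟨hmem, hfr⟩
      have heq : gauge Ω x = 1 - t / 2 := frontier_le_subset_eq hP hQ hfr
      have h2t : (0:ℝ) < 2 - t := hcyl _ hmem
      have hγpos : (0:ℝ) < gauge Ω x := by rw [heq]; linarith
      have h1 : (gauge Ω x)⁻¹ = 2 / (2 - t) := by
        rw [heq]; rw [eq_div_iff (ne_of_gt h2t)]
        field_simp
      have h2 : 2 - (2 - t) / gauge Ω x = 0 := by
        rw [heq]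
        field_simp
        ring
      simp only [Prod.mk.injEq]
      constructor
      · rw [h1]
      · exact h2.symm
    · apply ContinuousOn.prodMk
      · apply ContinuousOn.fun_smul
        · apply ContinuousOn.div continuousOn_const (by fun_prop)
          intro p hp
          exact ne_of_gt (hcyl p hp.1)
        · exact continuous_fst.continuousOn
      · exact continuousOn_const
    · have hsub : closure {p : EuclideanSpace ℝ (Fin (m-1)) × ℝ |
          ¬ gauge Ω p.1 ≤ 1 - p.2 / 2} ⊆ {p | 1 - p.2 / 2 ≤ gauge Ω p.1} := by
        have : {p : EuclideanSpace ℝ (Fin (m-1)) × ℝ | ¬ gauge Ω p.1 ≤ 1 - p.2 / 2}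
            = {p | 1 - p.2 / 2 < gauge Ω p.1} := by ext p; simp [not_le]
        rw [this]
        exact closure_lt_subset_le hQ hP
      have hγpos : ∀ p ∈ (closure Ω ×ˢ Set.Icc (0:ℝ) 1) ∩
          closure {p : EuclideanSpace ℝ (Fin (m-1)) × ℝ | ¬ gauge Ω p.1 ≤ 1 - p.2 / 2},
          (0:ℝ) < gauge Ω p.1 := by
        rintro ⟨x, t⟩ ⟨⟨hx, ht0, ht1⟩, hcl⟩
        have := hsub hcl
        simp only [mem_setOf_eq] at this
        simp only at ht0 ht1 ⊢
        linarith
      apply ContinuousOn.prodMk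
      · apply ContinuousOn.fun_smul
        · exact (hP.continuousOn.inv₀ (fun p hp => ne_of_gt (hγpos p hp)))
        · exact continuous_fst.continuousOn
      · apply ContinuousOn.sub continuousOn_const
        apply ContinuousOn.div (by fun_prop) hP.continuousOn
        exact fun p hp => ne_of_gt (hγpos p hp)
  · -- EqOn
    rintro ⟨x, t⟩ (⟨hx, ht⟩ | ⟨hx, ht0, ht1⟩)
    · simp only [mem_singleton_iff] at ht
      subst ht
      have hγx : gauge Ω x ≤ 1 := (hclos x).2 hx
      unfold psiMap
      simp only [if_pos (by simpa using hγx : gauge Ω x ≤ 1 - (0:ℝ)/2)]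
      norm_num
    · have hγx : gauge Ω x = 1 := (hfront x).2 hx
      simp only at ht0 ht1
      unfold psiMap
      simp only [hγx]
      split_ifs with h
      · have ht : t = 0 := by linarith
        subst ht
        norm_num
      · norm_num
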